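/- Let H be a hypergraph with an ordering v_1,…,v_n of its vertices, let i ∈ {0,…,n−1}, let T* be a minimal transversal of H_i, and let X ⊆ V_{i+1} \ T* be such that T* ∪ X is a minimal transversal of H_{i+1}. Then X contains at most one vertex per equivalence class of ≡_{i+1}; that is, for any two distinct x, x' ∈ X, the trace of x on inc_{i+1}(v_{i+1}) differs from the trace of x' on inc_{i+1}(v_{i+1}). -/

import Mathlib

/-- `T` is a transversal of the induced hypergraph `H[S]`, where the ambient
hypergraph has edge family `E`: `T ⊆ S` and `T` meets every edge of `E` that is
contained in `S`. -/
def IsTransversal {α : Type*} [DecidableEq α]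
    (E : Finset (Finset α)) (S T : Finset α) : Prop :=
  T ⊆ S ∧ ∀ e ∈ E, e ⊆ S → (e ∩ T).Nonempty

/-- `T` is a minimal transversal of `H[S]`: it is a transversal and no proper
subset of it is a transversal. -/
def IsMinTransversal {α : Type*} [DecidableEq α]
    (E : Finset (Finset α)) (S T : Finset α) : Prop :=
  IsTransversal E S T ∧ ∀ T' ⊂ T, ¬ IsTransversal E S T'

/-- Let `H` be a hypergraph with an ordering `v 0, …, v (n-1)` of its vertices,
let `i ∈ {0,…,n-1}`, let `T*` be a minimal transversal of `H_i = H[{v 0,…,v (i-1)}]`,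
and let `X ⊆ V_{i+1} \ T*` (with `V_{i+1} = {v 0,…,v i}`) be such that `T* ∪ X` is a
minimal transversal of `H_{i+1} = H[V_{i+1}]`. Then `X` contains at most one vertex
per equivalence class of `≡_{i+1}`: any two distinct `x, x' ∈ X` have different
traces on `inc_{i+1}(v_{i+1})`, the set of edges of `H_{i+1}` containing `v i`. -/
theorem distinct_traces_of_children_extension
    {α : Type*} [DecidableEq α] {n : ℕ} (V : Finset α) (E : Finset (Finset α))
    (hE : ∀ e ∈ E, e ⊆ V)
    (v : Fin n → α) (hinj : Function.Injective v) (hV : V = Finset.univ.image v)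
    (i : Fin n) (Tstar X : Finset α)
    (hT : IsMinTransversal E ((Finset.Iio i).image v) Tstar)
    (hX : X ⊆ (Finset.Iic i).image v \ Tstar)
    (hTX : IsMinTransversal E ((Finset.Iic i).image v) (Tstar ∪ X)) :
    ∀ x ∈ X, ∀ x' ∈ X, x ≠ x' →
      E.filter (fun e => e ⊆ (Finset.Iic i).image v ∧ v i ∈ e ∧ x ∈ e) ≠
        E.filter (fun e => e ⊆ (Finset.Iic i).image v ∧ v i ∈ e ∧ x' ∈ e) := by
  intro x hx x' hx' hne heq
  obtain ⟨⟨hTXsub, hTXmeet⟩, hmin⟩ := hTX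
  have hxTX : x ∈ Tstar ∪ X := Finset.mem_union_right _ hx
  have hprop := hmin ((Tstar ∪ X).erase x) (Finset.erase_ssubset hxTX)
  rw [IsTransversal] at hprop
  push_neg at hprop
  have hsub : (Tstar ∪ X).erase x ⊆ (Finset.Iic i).image v :=
    (Finset.erase_subset _ _).trans hTXsub
  obtain ⟨e, heE, hesub, hempty⟩ := hprop hsub
  have hempty : e ∩ (Tstar ∪ X).erase x = ∅ := hempty
  -- every element of e ∩ (Tstar ∪ X) equals x
  have honly : ∀ y ∈ e, y ∈ Tstar ∪ X → y = x := by
    intro y hye hyTX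
    by_contra h
    have : y ∈ e ∩ (Tstar ∪ X).erase x :=
      Finset.mem_inter.mpr ⟨hye, Finset.mem_erase.mpr ⟨h, hyTX⟩⟩
    simp [hempty] at this
  have hxe : x ∈ e := by
    obtain ⟨y, hy⟩ := hTXmeet e heE hesub
    rw [Finset.mem_inter] at hy
    rw [← honly y hy.1 hy.2]; exact hy.1
  have hxnT : x ∉ Tstar := (Finset.mem_sdiff.mp (hX hx)).2
  have hx'e : x' ∉ e := fun h => hne ((honly x' h (Finset.mem_union_right _ hx')).symm)
  have hvie : v i ∈ e := by
    by_contra hvi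
    have hesub' : e ⊆ (Finset.Iio i).image v := by
      intro w hw
      obtain ⟨j, _, rfl⟩ := Finset.mem_image.mp (hesub hw)
      refine Finset.mem_image.mpr ⟨j, Finset.mem_Iio.mpr ?_, rfl⟩
      rcases lt_or_eq_of_le (Finset.mem_Iic.mp (by
        have := hesub hw
        obtain ⟨j', hj', hj'e⟩ := Finset.mem_image.mp this
        -- j' with v j' = v j, so j' = j
        rw [hinj hj'e] at hj'; exact hj')) with h | h
      · exact h
      · exact absurd (h ▸ hw) hvi
    obtain ⟨y, hy⟩ := hT.1.2 e heE hesub'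
    rw [Finset.mem_inter] at hy
    have := honly y hy.1 (Finset.mem_union_left _ hy.2)
    exact hxnT (this ▸ hy.2)
  have : e ∈ E.filter (fun e => e ⊆ (Finset.Iic i).image v ∧ v i ∈ e ∧ x ∈ e) :=
    Finset.mem_filter.mpr ⟨heE, hesub, hvie, hxe⟩
  rw [heq, Finset.mem_filter] at this
  exact hx'e this.2.2.2
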